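/- Let ζ : ℝ≥0 → ℝ^m be continuously differentiable with ζ(τ) = z0 + ητ - ε Ψ ∫_0^τ sin(ζ(r)) dr (componentwise sine), where η ∈ ℝ^m has all entries with absolute value at least 1 and Ψ ∈ ℝ^{m×m}. Then for all τ ≥ 0 and T > 0, the componentwise bound ‖(1/T) ∫_τ^{τ+T} cos(ζ(s)) ds‖_∞ ≤ 2/T + ε ‖Ψ‖_∞ holds. -/

import Mathlib

open Matrix intervalIntegral MeasureTheory

attribute [local instance] Matrix.linftyOpNormedAddCommGroup

theorem stmt_16 {m : ℕ}
    (z0 η : Fin m → ℝ) (hη : ∀ i, 1 ≤ |η i|)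
    (ε : ℝ) (hε : 0 ≤ ε) (Ψ : Matrix (Fin m) (Fin m) ℝ)
    (ζ : ℝ → (Fin m → ℝ)) (hζ : Continuous ζ)
    (hint : ∀ τ : ℝ, 0 ≤ τ →
      ζ τ = z0 + τ • η - ε • Ψ.mulVec (∫ r in (0 : ℝ)..τ, fun i => Real.sin (ζ r i))) :
    ∀ τ T : ℝ, 0 ≤ τ → 0 < T →
      ‖(1 / T) • ∫ s in τ..(τ + T), (fun i => Real.cos (ζ s i) : Fin m → ℝ)‖
        ≤ 2 / T + ε * ‖Ψ‖ := by
  intro τ T hτ hT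
  set w : ℝ → Fin m → ℝ := fun s i => Real.sin (ζ s i) with hw
  have hwc : Continuous w :=
    continuous_pi fun i => Real.continuous_sin.comp ((continuous_apply i).comp hζ)
  have hwnorm : ∀ s, ‖w s‖ ≤ 1 := by
    intro s
    refine (pi_norm_le_iff_of_nonneg zero_le_one).mpr fun i => ?_
    simpa [Real.norm_eq_abs] using Real.abs_sin_le_one (ζ s i)
  set L : (Fin m → ℝ) →L[ℝ] (Fin m → ℝ) := LinearMap.toContinuousLinearMap (Matrix.mulVecLin Ψ) with hL
  have hLapp : ∀ x, L x = Ψ.mulVec x := fun x => rfl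
  set v : ℝ → Fin m → ℝ := fun s => ∫ r in (0:ℝ)..s, w r with hv
  have hvderiv : ∀ s : ℝ, HasDerivAt v (w s) s := by
    intro s
    exact intervalIntegral.integral_hasDerivAt_right (hwc.intervalIntegrable _ _)
      (hwc.stronglyMeasurable.stronglyMeasurableAtFilter) hwc.continuousAt
  set g : ℝ → Fin m → ℝ := fun s => z0 + s • η - ε • Ψ.mulVec (v s) with hg
  have hζg : ∀ s : ℝ, 0 ≤ s → ζ s = g s := hint
  have hgderiv : ∀ s : ℝ, HasDerivAt g (η - ε • Ψ.mulVec (w s)) s := by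
    intro s
    have h1 : HasDerivAt (fun s : ℝ => z0 + s • η) η s := by
      exact ((hasDerivAt_const s z0).add ((hasDerivAt_id s).smul_const η)).congr_deriv (by simp)
    have h2 : HasDerivAt (fun s => Ψ.mulVec (v s)) (Ψ.mulVec (w s)) s := by
      exact (L.hasFDerivAt.comp_hasDerivAt s (hvderiv s))
    exact h1.sub (h2.const_smul ε)
  have hgc : Continuous g := by
    rw [continuous_iff_continuousAt]; exact fun s => (hgderiv s).continuousAt
  have hΨ0 : (0:ℝ) ≤ ‖Ψ‖ := norm_nonneg _
  -- componentwise analysis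
  set A : ℝ → Fin m → ℝ := fun s => Ψ.mulVec (w s) with hA
  have hAc : Continuous A := by
    have : Continuous fun s => L (w s) := L.continuous.comp hwc
    simpa [hLapp] using this
  have hAbound : ∀ s i, |A s i| ≤ ‖Ψ‖ := by
    intro s i
    calc |A s i| ≤ ‖A s‖ := by
            simpa [Real.norm_eq_abs] using norm_le_pi_norm (A s) i
      _ ≤ ‖Ψ‖ * ‖w s‖ := Matrix.linfty_opNorm_mulVec Ψ (w s)
      _ ≤ ‖Ψ‖ * 1 := mul_le_mul_of_nonneg_left (hwnorm s) hΨ0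
      _ = ‖Ψ‖ := mul_one _
  set I : Fin m → ℝ := fun i => ∫ s in τ..(τ + T), Real.cos (g s i) with hI
  have hIbound : ∀ i, |I i| ≤ 2 + ε * (‖Ψ‖ * T) := by
    intro i
    have hgi : ∀ s : ℝ, HasDerivAt (fun s => g s i) (η i - ε * A s i) s := by
      intro s
      have := (ContinuousLinearMap.proj (R := ℝ) (φ := fun _ : Fin m => ℝ) i).hasFDerivAt.comp_hasDerivAt s (hgderiv s)
      exact this
    have hgic : Continuous fun s => g s i := (continuous_apply i).comp hgc
    have hcosc : Continuous fun s => Real.cos (g s i) := Real.continuous_cos.comp hgic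
    have hAic : Continuous fun s => A s i := (continuous_apply i).comp hAc
    have hInt1 : IntervalIntegrable (fun s => Real.cos (g s i) * (η i - ε * A s i)) MeasureTheory.volume τ (τ + T) :=
      (hcosc.mul (continuous_const.sub (continuous_const.mul hAic))).intervalIntegrable _ _
    have hInt2 : IntervalIntegrable (fun s => Real.cos (g s i) * A s i) MeasureTheory.volume τ (τ + T) :=
      (hcosc.mul hAic).intervalIntegrable _ _
    have key : ∫ s in τ..(τ + T), Real.cos (g s i) * (η i - ε * A s i)
        = Real.sin (g (τ + T) i) - Real.sin (g τ i) :=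
      intervalIntegral.integral_eq_sub_of_hasDerivAt (fun s _ => (hgi s).sin) hInt1
    have hsplit : η i * I i = (Real.sin (g (τ + T) i) - Real.sin (g τ i))
        + ε * ∫ s in τ..(τ + T), Real.cos (g s i) * A s i := by
      rw [← key, ← intervalIntegral.integral_const_mul, ← intervalIntegral.integral_const_mul,
        ← intervalIntegral.integral_add hInt1 (hInt2.const_mul ε)]
      apply intervalIntegral.integral_congr
      intro s _
      ring
    have hJ : |∫ s in τ..(τ + T), Real.cos (g s i) * A s i| ≤ ‖Ψ‖ * T := by
      have := intervalIntegral.norm_integral_le_of_norm_le_const (C := ‖Ψ‖)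
        (f := fun s => Real.cos (g s i) * A s i) (a := τ) (b := τ + T) ?_
      · simpa [Real.norm_eq_abs, abs_of_pos hT] using this
      · intro s _
        rw [Real.norm_eq_abs, abs_mul]
        calc |Real.cos (g s i)| * |A s i| ≤ 1 * ‖Ψ‖ :=
              mul_le_mul (Real.abs_cos_le_one _) (hAbound s i) (abs_nonneg _) zero_le_one
          _ = ‖Ψ‖ := one_mul _
    have hηI : |η i * I i| ≤ 2 + ε * (‖Ψ‖ * T) := by
      rw [hsplit]
      refine (abs_add_le _ _).trans ?_
      gcongr
      · calc |Real.sin (g (τ + T) i) - Real.sin (g τ i)|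
            ≤ |Real.sin (g (τ + T) i)| + |Real.sin (g τ i)| := abs_sub _ _
          _ ≤ 1 + 1 := add_le_add (Real.abs_sin_le_one _) (Real.abs_sin_le_one _)
          _ = 2 := by norm_num
      · calc |ε * ∫ s in τ..(τ + T), Real.cos (g s i) * A s i|
            = ε * |∫ s in τ..(τ + T), Real.cos (g s i) * A s i| := by
              rw [abs_mul, abs_of_nonneg hε]
          _ ≤ ε * (‖Ψ‖ * T) := mul_le_mul_of_nonneg_left hJ hε
    calc |I i| ≤ |η i| * |I i| := le_mul_of_one_le_left (abs_nonneg _) (hη i)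
      _ = |η i * I i| := (abs_mul _ _).symm
      _ ≤ 2 + ε * (‖Ψ‖ * T) := hηI
  -- identify the vector integral with I
  have hcoscont : Continuous fun s => (fun i => Real.cos (g s i) : Fin m → ℝ) :=
    continuous_pi fun i => Real.continuous_cos.comp ((continuous_apply i).comp hgc)
  have hVg : (∫ s in τ..(τ + T), (fun i => Real.cos (ζ s i) : Fin m → ℝ))
      = ∫ s in τ..(τ + T), (fun i => Real.cos (g s i) : Fin m → ℝ) := by
    apply intervalIntegral.integral_congr
    intro s hs
    rw [Set.uIcc_of_le (by linarith)] at hs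
    have hs0 : 0 ≤ s := le_trans hτ hs.1
    simp only [hζg s hs0]
  have hVI : ∀ i, (∫ s in τ..(τ + T), (fun i => Real.cos (ζ s i) : Fin m → ℝ)) i = I i := by
    intro i
    rw [hVg]
    have := (ContinuousLinearMap.proj (R := ℝ) (φ := fun _ : Fin m => ℝ) i).intervalIntegral_comp_comm
      (hcoscont.intervalIntegrable (μ := MeasureTheory.volume) τ (τ + T))
    exact this.symm
  have hVnorm : ‖∫ s in τ..(τ + T), (fun i => Real.cos (ζ s i) : Fin m → ℝ)‖ ≤ 2 + ε * (‖Ψ‖ * T) := by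
    refine (pi_norm_le_iff_of_nonneg (by positivity)).mpr fun i => ?_
    rw [Real.norm_eq_abs, hVI i]
    exact hIbound i
  rw [norm_smul, Real.norm_eq_abs, abs_of_pos (by positivity : (0:ℝ) < 1 / T)]
  calc (1 / T) * ‖∫ s in τ..(τ + T), (fun i => Real.cos (ζ s i) : Fin m → ℝ)‖
      ≤ (1 / T) * (2 + ε * (‖Ψ‖ * T)) := by
        exact mul_le_mul_of_nonneg_left hVnorm (by positivity)
    _ = 2 / T + ε * ‖Ψ‖ := by field_simp
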